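/- Let Z : (0,∞) → ℝ be a nonnegative measurable function with Z ∈ L²(0,∞) and ∫₀^∞ Z(t)² dt ≤ Y for some Y > 0. Suppose there exist α ∈ (1,2), ζ > 0, and an open set M ⊆ (0,∞) such that (∫ₛ^∞ Z(t)² dt)^α ≤ ζ · Z(s)² for almost every s ∈ M. Then Z is integrable on M, and there exists a constant C depending only on Y, α, ζ (not on M) such that ∫_M Z(t) dt ≤ C. -/

import Mathlib

open MeasureTheory Set Filter Topology
open scoped ENNReal NNReal

/-- Auxiliary: if the tail integrals of `Z^2` are at most `c` at every point of `A ⊆ (0,∞)`,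
then the integral of `Z^2` over `A` is at most `c`. -/
lemma aux_tail_bound (Z : ℝ → ℝ)
    (hZL2 : IntegrableOn (fun t => Z t ^ 2) (Set.Ioi 0))
    {c : ℝ} (hc : 0 ≤ c) {A : Set ℝ} (hA0 : A ⊆ Set.Ioi 0)
    (hAc : ∀ s ∈ A, (∫ t in Set.Ioi s, Z t ^ 2) ≤ c) :
    ∫ t in A, Z t ^ 2 ≤ c := by
  rcases A.eq_empty_or_nonempty with rfl | hne
  · simpa using hc
  have hbdd : BddBelow A := ⟨0, fun x hx => (hA0 hx).le⟩
  set a := sInf A with hadef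
  have ha0 : 0 ≤ a := le_csInf hne fun x hx => (hA0 hx).le
  have hIci0 : IntegrableOn (fun t => Z t ^ 2) (Set.Ici 0) :=
    hZL2.congr_set_ae Ioi_ae_eq_Ici.symm
  have hIcia : IntegrableOn (fun t => Z t ^ 2) (Set.Ici a) :=
    hIci0.mono_set (Ici_subset_Ici.2 ha0)
  have hIoia : IntegrableOn (fun t => Z t ^ 2) (Set.Ioi a) :=
    hIcia.mono_set Ioi_subset_Ici_self
  have h1 : ∫ t in A, Z t ^ 2 ≤ ∫ t in Set.Ioi a, Z t ^ 2 := by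
    calc ∫ t in A, Z t ^ 2 ≤ ∫ t in Set.Ici a, Z t ^ 2 :=
          setIntegral_mono_set hIcia
            (Eventually.of_forall fun t => sq_nonneg (Z t))
            (HasSubset.Subset.eventuallyLE fun x hx => csInf_le hbdd hx)
      _ = ∫ t in Set.Ioi a, Z t ^ 2 := (setIntegral_congr_set Ioi_ae_eq_Ici).symm
  refine h1.trans ?_
  have key : ∀ n : ℕ, ∫ t in Set.Ioi a, Z t ^ 2
      ≤ (∫ t in Set.Ioc a (a + 1/((n:ℝ)+1)), Z t ^ 2) + c := by
    intro n
    have hpos : (0:ℝ) < 1/((n:ℝ)+1) := by positivity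
    obtain ⟨s, hsA, hs⟩ := (csInf_lt_iff hbdd hne).1
      (show sInf A < a + 1/((n:ℝ)+1) by rw [← hadef]; linarith)
    have has : a ≤ s := csInf_le hbdd hsA
    have hsplit : ∫ t in Set.Ioi a, Z t ^ 2
        = (∫ t in Set.Ioc a s, Z t ^ 2) + ∫ t in Set.Ioi s, Z t ^ 2 := by
      rw [← setIntegral_union (Ioc_disjoint_Ioi le_rfl) measurableSet_Ioi
        (hIoia.mono_set Ioc_subset_Ioi_self)
        (hIoia.mono_set (Ioi_subset_Ioi has)), Ioc_union_Ioi_eq_Ioi has]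
    rw [hsplit]
    refine add_le_add ?_ (hAc s hsA)
    exact setIntegral_mono_set (hIcia.mono_set (fun x hx => le_of_lt hx.1))
      (Eventually.of_forall fun t => sq_nonneg (Z t))
      (HasSubset.Subset.eventuallyLE (Ioc_subset_Ioc_right hs.le))
  have htend : Tendsto (fun n : ℕ => ∫ t in Set.Ioc a (a + 1/((n:ℝ)+1)), Z t ^ 2)
      atTop (𝓝 0) := by
    have hanti : Antitone (fun n : ℕ => Set.Ioc a (a + 1/((n:ℝ)+1))) := by
      intro m n hmn
      refine Ioc_subset_Ioc_right (add_le_add le_rfl ?_)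
      refine one_div_le_one_div_of_le (by positivity) ?_
      exact add_le_add_left (by exact_mod_cast hmn) 1
    have h0 : (⋂ n : ℕ, Set.Ioc a (a + 1/((n:ℝ)+1))) = ∅ := by
      refine eq_empty_iff_forall_notMem.2 fun x hx => ?_
      simp only [mem_iInter, mem_Ioc] at hx
      obtain ⟨n, hn⟩ := exists_nat_one_div_lt (sub_pos.2 (hx 0).1)
      have := (hx n).2
      linarith
    have := tendsto_setIntegral_of_antitone (μ := volume) (f := fun t => Z t ^ 2)
      (s := fun n : ℕ => Set.Ioc a (a + 1/((n:ℝ)+1)))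
      (fun _ => measurableSet_Ioc) hanti
      ⟨0, hIcia.mono_set (fun x hx => le_of_lt hx.1)⟩
    rw [h0] at this
    simpa using this
  have : Tendsto (fun n : ℕ => (∫ t in Set.Ioc a (a + 1/((n:ℝ)+1)), Z t ^ 2) + c)
      atTop (𝓝 (0 + c)) := htend.add tendsto_const_nhds
  have hle := ge_of_tendsto this (Eventually.of_forall key)
  linarith

/-- Feireisl–Simondon integrability lemma: a nonnegative square-integrable function on
`(0,∞)` satisfying the tail inequality on an open set `M` is integrable on `M`, with a
bound depending only on `Y`, `α`, `ζ` (not on `M`). -/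
theorem stmt0 (Y α ζ : ℝ) (hY : 0 < Y) (hα1 : 1 < α) (hα2 : α < 2) (hζ : 0 < ζ)
    (Z : ℝ → ℝ) (hZmeas : Measurable Z) (hZnn : ∀ t ∈ Set.Ioi (0:ℝ), 0 ≤ Z t)
    (hZL2 : IntegrableOn (fun t => Z t ^ 2) (Set.Ioi 0))
    (hint : ∫ t in Set.Ioi (0:ℝ), Z t ^ 2 ≤ Y) :
    ∃ C > 0, ∀ M : Set ℝ, IsOpen M → M ⊆ Set.Ioi 0 →
      (∀ᵐ s ∂(volume.restrict M), (∫ t in Set.Ioi s, Z t ^ 2) ^ α ≤ ζ * Z s ^ 2) →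
      IntegrableOn Z M ∧ ∫ t in M, Z t ≤ C := by
  classical
  have hα0 : (0:ℝ) < α := by linarith
  set F : ℝ → ℝ := fun s => ∫ t in Set.Ioi (max s 0), Z t ^ 2 with hFdef
  have hFanti : Antitone F := by
    intro x y hxy
    exact setIntegral_mono_set (hZL2.mono_set (Ioi_subset_Ioi (le_max_right x 0)))
      (Eventually.of_forall fun t => sq_nonneg (Z t))
      (HasSubset.Subset.eventuallyLE (Ioi_subset_Ioi (max_le_max hxy le_rfl)))
  have hFmeas : Measurable F := hFanti.measurable
  have hFpos : ∀ s, 0 ≤ F s := fun s => integral_nonneg fun t => sq_nonneg (Z t)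
  have hFY : ∀ s, F s ≤ Y := by
    intro s
    refine le_trans (setIntegral_mono_set hZL2
      (Eventually.of_forall fun t => sq_nonneg (Z t))
      (HasSubset.Subset.eventuallyLE (Ioi_subset_Ioi (le_max_right s 0)))) hint
  have hFeq : ∀ s : ℝ, 0 < s → F s = ∫ t in Set.Ioi s, Z t ^ 2 := by
    intro s hs
    simp only [hFdef, max_eq_left hs.le]
  set b : ℕ → ℝ := fun k => Y / 2 ^ (k + 1) with hbdef
  have hb : ∀ k, 0 < b k := fun k => by positivity
  set δ : ℕ → ℝ := fun k => Real.sqrt (b k ^ α / ζ) with hδdef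
  have hδ : ∀ k, 0 < δ k := fun k =>
    Real.sqrt_pos.2 (div_pos (Real.rpow_pos_of_pos (hb k) α) hζ)
  set c : ℕ → ℝ := fun k => (δ k)⁻¹ * (Y / 2 ^ k) with hcdef
  have hcpos : ∀ k, 0 < c k := fun k => by
    have := hδ k
    simp only [hcdef]
    positivity
  set r : ℝ := Real.sqrt ((2:ℝ) ^ α) / 2 with hrdef
  have hsq2 : (0:ℝ) < Real.sqrt ((2:ℝ) ^ α) :=
    Real.sqrt_pos.2 (Real.rpow_pos_of_pos two_pos α)
  have hr0 : 0 < r := by rw [hrdef]; positivity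
  have hr1 : r < 1 := by
    rw [hrdef, div_lt_one (by norm_num : (0:ℝ) < 2)]
    have h24 : (2:ℝ) ^ (2:ℝ) = 4 := by
      have := Real.rpow_natCast (2:ℝ) 2
      norm_num at this
      linarith [this]
    have h4 : ((2:ℝ) ^ α) < 4 := by
      have h2 : ((2:ℝ) ^ α) < (2:ℝ) ^ (2:ℝ) :=
        (Real.rpow_lt_rpow_left_iff (by norm_num : (1:ℝ) < 2)).2 hα2
      linarith
    calc Real.sqrt ((2:ℝ) ^ α) < Real.sqrt 4 :=
          Real.sqrt_lt_sqrt (Real.rpow_nonneg (by norm_num) α) h4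
      _ = 2 := by
          rw [show (4:ℝ) = 2 ^ 2 by norm_num, Real.sqrt_sq (by norm_num : (0:ℝ) ≤ 2)]
  have hcrec : ∀ k, c (k + 1) = r * c k := by
    intro k
    have hb2 : b (k + 1) = b k / 2 := by
      simp only [hbdef]
      rw [pow_succ]
      ring
    have hδ2 : δ (k + 1) = δ k / Real.sqrt ((2:ℝ) ^ α) := by
      simp only [hδdef]
      rw [hb2, Real.div_rpow (hb k).le (by norm_num : (0:ℝ) ≤ 2), div_right_comm,
        Real.sqrt_div (div_nonneg (Real.rpow_nonneg (hb k).le α) hζ.le)]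
    have hδk := hδ k
    have h2k : (0:ℝ) < 2 ^ k := by positivity
    simp only [hcdef]
    rw [hδ2, hrdef, pow_succ]
    field_simp
  have hck : ∀ k, c k = c 0 * r ^ k := by
    intro k
    induction k with
    | zero => simp
    | succ n ih => rw [hcrec n, ih, pow_succ]; ring
  set C : ℝ := c 0 / (1 - r) with hCdef
  have hC0 : 0 < C := div_pos (hcpos 0) (by linarith)
  refine ⟨C, hC0, fun M hMopen hMsub hae => ?_⟩
  have hMmeas : MeasurableSet M := hMopen.measurableSet
  set Mk : ℕ → Set ℝ := fun k => M ∩ {s | b k < F s ∧ F s ≤ Y / 2 ^ k} with hMkdef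
  have hMkmeas : ∀ k, MeasurableSet (Mk k) := fun k =>
    hMmeas.inter ((measurableSet_lt measurable_const hFmeas).inter
      (measurableSet_le hFmeas measurable_const))
  set N : Set ℝ := M ∩ {s | F s ≤ 0} with hNdef
  have hcover : M ⊆ N ∪ ⋃ k, Mk k := by
    intro s hs
    by_cases h0 : F s ≤ 0
    · exact Or.inl ⟨hs, h0⟩
    push_neg at h0
    right
    have hex : ∃ n : ℕ, b n < F s := by
      obtain ⟨n, hn⟩ := pow_unbounded_of_one_lt (Y / F s) (one_lt_two (α := ℝ))
      refine ⟨n, ?_⟩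
      show Y / 2 ^ (n + 1) < F s
      rw [div_lt_iff₀ (by positivity)]
      rw [div_lt_iff₀ h0] at hn
      have h2 : (2:ℝ) ^ n ≤ 2 ^ (n + 1) := by
        rw [pow_succ]; nlinarith [pow_pos (show (0:ℝ) < 2 by norm_num) n]
      nlinarith
    have hk : b (Nat.find hex) < F s := Nat.find_spec hex
    have hk2 : F s ≤ Y / 2 ^ (Nat.find hex) := by
      rcases Nat.eq_zero_or_eq_succ_pred (Nat.find hex) with h | h
      · rw [h]; simpa using hFY s
      · rw [h]
        have hlt : Nat.find hex - 1 < Nat.find hex := by omega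
        have := Nat.find_min hex hlt
        push_neg at this
        calc F s ≤ b (Nat.find hex - 1) := this
          _ = Y / 2 ^ (Nat.find hex - 1 + 1) := rfl
    exact mem_iUnion.2 ⟨Nat.find hex, hs, hk, hk2⟩
  have hZnnM : ∀ᵐ s ∂(volume.restrict M), 0 ≤ Z s :=
    (ae_restrict_mem hMmeas).mono fun s hs => hZnn s (hMsub hs)
  have hN : ∫⁻ s in N, ENNReal.ofReal (Z s) = 0 := by
    rcases N.eq_empty_or_nonempty with hNe | hNe
    · rw [hNe]; simp
    have hN0 : N ⊆ Set.Ioi 0 := fun s hs => hMsub hs.1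
    have hbddN : BddBelow N := ⟨0, fun x hx => (hN0 hx).le⟩
    set a := sInf N with hadef
    have hZ0 : ∀ᵐ t ∂(volume.restrict (Set.Ioi a)), Z t = 0 := by
      have hunion : Set.Ioi a = ⋃ n : ℕ, Set.Ici (a + 1/((n:ℝ)+1)) := by
        ext x
        simp only [mem_Ioi, mem_iUnion, mem_Ici]
        constructor
        · intro hx
          obtain ⟨n, hn⟩ := exists_nat_one_div_lt (sub_pos.2 hx)
          exact ⟨n, by linarith⟩
        · rintro ⟨n, hn⟩
          have hpos : (0:ℝ) < 1/((n:ℝ)+1) := by positivity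
          linarith
      rw [hunion, ae_restrict_iUnion_iff]
      intro n
      have hpos : (0:ℝ) < 1/((n:ℝ)+1) := by positivity
      obtain ⟨s, hsN, hs⟩ := (csInf_lt_iff hbddN hNe).1
        (show sInf N < a + 1/((n:ℝ)+1) by rw [← hadef]; linarith)
      have hs0 : (0:ℝ) < s := hN0 hsN
      have hFs : F s = 0 := le_antisymm hsN.2 (hFpos s)
      have hint0 : ∫ t in Set.Ioi s, Z t ^ 2 = 0 := by rw [← hFeq s hs0]; exact hFs
      have hsq : (fun t => Z t ^ 2) =ᵐ[volume.restrict (Set.Ioi s)] 0 :=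
        (integral_eq_zero_iff_of_nonneg_ae
          (Eventually.of_forall fun t => sq_nonneg (Z t))
          (hZL2.mono_set (Ioi_subset_Ioi hs0.le))).1 hint0
      have hsub : Set.Ici (a + 1/((n:ℝ)+1)) ⊆ Set.Ioi s := fun x hx => lt_of_lt_of_le hs hx
      filter_upwards [ae_restrict_of_ae_restrict_of_subset hsub hsq] with t ht
      have : Z t ^ 2 = 0 := ht
      exact pow_eq_zero_iff (two_ne_zero) |>.1 this
    have hNsub : N ⊆ Set.Ici a := fun s hs => csInf_le hbddN hs
    have h1 : ∀ᵐ t ∂(volume.restrict (Set.Ici a)), Z t = 0 := by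
      rwa [← Measure.restrict_congr_set (Ioi_ae_eq_Ici (a := a))]
    have hZ0N : ∀ᵐ t ∂(volume.restrict N), Z t = 0 :=
      ae_restrict_of_ae_restrict_of_subset hNsub h1
    calc ∫⁻ s in N, ENNReal.ofReal (Z s)
        = ∫⁻ s in N, 0 := lintegral_congr_ae (hZ0N.mono fun s hs => by simp [hs])
      _ = 0 := lintegral_zero
  have hMksub : ∀ k, Mk k ⊆ Set.Ioi 0 := fun k s hs => hMsub hs.1
  have hMkZ : ∀ k, ∫⁻ s in Mk k, ENNReal.ofReal (Z s) ≤ ENNReal.ofReal (c k) := by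
    intro k
    have haes : ∀ᵐ s ∂(volume.restrict (Mk k)),
        ENNReal.ofReal (Z s) ≤ ENNReal.ofReal ((δ k)⁻¹ * Z s ^ 2) := by
      filter_upwards [ae_restrict_mem (hMkmeas k),
        ae_restrict_of_ae_restrict_of_subset (inter_subset_left) hae] with s hs hineq
      have hs0 : (0:ℝ) < s := hMsub hs.1
      have hZs : 0 ≤ Z s := hZnn s (hMsub hs.1)
      have h1 : b k ^ α ≤ ζ * Z s ^ 2 := by
        refine le_trans ?_ hineq
        rw [← hFeq s hs0]
        exact Real.rpow_le_rpow (hb k).le hs.2.1.le hα0.le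
      have h2 : δ k ≤ Z s := by
        have hdle : b k ^ α / ζ ≤ Z s ^ 2 := by
          rw [div_le_iff₀ hζ]
          linarith
        calc δ k = Real.sqrt (b k ^ α / ζ) := rfl
          _ ≤ Real.sqrt (Z s ^ 2) := Real.sqrt_le_sqrt hdle
          _ = Z s := Real.sqrt_sq hZs
      have h3 : Z s ≤ (δ k)⁻¹ * Z s ^ 2 := by
        rw [inv_mul_eq_div, le_div_iff₀ (hδ k)]
        nlinarith
      exact ENNReal.ofReal_le_ofReal h3
    calc ∫⁻ s in Mk k, ENNReal.ofReal (Z s)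
        ≤ ∫⁻ s in Mk k, ENNReal.ofReal ((δ k)⁻¹ * Z s ^ 2) := lintegral_mono_ae haes
      _ = ∫⁻ s in Mk k, ENNReal.ofReal ((δ k)⁻¹) * ENNReal.ofReal (Z s ^ 2) := by
          simp_rw [ENNReal.ofReal_mul (inv_nonneg.2 (hδ k).le)]
      _ = ENNReal.ofReal ((δ k)⁻¹) * ∫⁻ s in Mk k, ENNReal.ofReal (Z s ^ 2) :=
          lintegral_const_mul' _ _ ENNReal.ofReal_ne_top
      _ = ENNReal.ofReal ((δ k)⁻¹) * ENNReal.ofReal (∫ s in Mk k, Z s ^ 2) := by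
          rw [← ofReal_integral_eq_lintegral_ofReal
            (hZL2.mono_set (hMksub k)) (Eventually.of_forall fun t => sq_nonneg (Z t))]
      _ ≤ ENNReal.ofReal ((δ k)⁻¹) * ENNReal.ofReal (Y / 2 ^ k) := by
          gcongr
          exact aux_tail_bound Z hZL2 (by positivity) (hMksub k)
            (fun s hs => by rw [← hFeq s (hMksub k hs)]; exact hs.2.2)
      _ = ENNReal.ofReal (c k) := by
          rw [← ENNReal.ofReal_mul (inv_nonneg.2 (hδ k).le)]
  have hsum : (∑' k : ℕ, ENNReal.ofReal (c k)) = ENNReal.ofReal C := by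
    have h1 : ∀ k : ℕ, ENNReal.ofReal (c k)
        = ENNReal.ofReal (c 0) * ENNReal.ofReal r ^ k := by
      intro k
      rw [hck k, ENNReal.ofReal_mul (hcpos 0).le, ENNReal.ofReal_pow hr0.le]
    rw [tsum_congr h1, ENNReal.tsum_mul_left, ENNReal.tsum_geometric]
    have h2 : (1 : ℝ≥0∞) - ENNReal.ofReal r = ENNReal.ofReal (1 - r) := by
      rw [ENNReal.ofReal_sub 1 hr0.le, ENNReal.ofReal_one]
    rw [h2, hCdef, ENNReal.ofReal_div_of_pos (by linarith : (0:ℝ) < 1 - r),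
      div_eq_mul_inv]
  have hmain : ∫⁻ s in M, ENNReal.ofReal (Z s) ≤ ENNReal.ofReal C := by
    calc ∫⁻ s in M, ENNReal.ofReal (Z s)
        ≤ ∫⁻ s in N ∪ ⋃ k, Mk k, ENNReal.ofReal (Z s) := lintegral_mono_set hcover
      _ ≤ (∫⁻ s in N, ENNReal.ofReal (Z s))
          + ∫⁻ s in ⋃ k, Mk k, ENNReal.ofReal (Z s) := lintegral_union_le _ _ _
      _ ≤ 0 + ∑' k : ℕ, ∫⁻ s in Mk k, ENNReal.ofReal (Z s) := by
          rw [hN]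
          exact add_le_add le_rfl (lintegral_iUnion_le _ _)
      _ ≤ ∑' k : ℕ, ENNReal.ofReal (c k) := by
          rw [zero_add]
          exact ENNReal.tsum_le_tsum hMkZ
      _ = ENNReal.ofReal C := hsum
  have haemeas : AEStronglyMeasurable Z (volume.restrict M) := hZmeas.aestronglyMeasurable
  have hfin : HasFiniteIntegral Z (volume.restrict M) := by
    show (∫⁻ s in M, (‖Z s‖₊ : ℝ≥0∞)) < ⊤
    have heq : ∫⁻ s in M, (‖Z s‖₊ : ℝ≥0∞) = ∫⁻ s in M, ENNReal.ofReal (Z s) :=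
      lintegral_congr_ae (hZnnM.mono fun s hs => Real.enorm_eq_ofReal hs)
    rw [heq]
    exact lt_of_le_of_lt hmain ENNReal.ofReal_lt_top
  refine ⟨⟨haemeas, hfin⟩, ?_⟩
  rw [integral_eq_lintegral_of_nonneg_ae hZnnM haemeas]
  exact ENNReal.toReal_le_of_le_ofReal hC0.le hmain
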